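/- Let R be a commutative ring with identity and M a maximal ideal of R. Then R(+)M is a maximal subring of the idealization R(+)R. In particular, R(+)R always has a maximal subring. -/

import Mathlib

open TrivSqZeroExt in
/-- The subring `R(+)I` of the idealization `R(+)R`. -/
def idealize (R : Type*) [CommRing R] (I : Ideal R) : Subring (TrivSqZeroExt R R) where
  carrier := {x | x.snd ∈ I}
  zero_mem' := by simp
  one_mem' := by simp
  add_mem' := by intro x y hx hy; simpa using I.add_mem hx hy
  neg_mem' := by intro x hx; simpa using I.neg_mem hx
  mul_mem' := by
    intro x y hx hy
    simp only [Set.mem_setOf_eq, TrivSqZeroExt.snd_mul, op_smul_eq_smul] at *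
    exact I.add_mem (I.smul_mem _ hy) (I.smul_mem _ hx)

open TrivSqZeroExt in
theorem idealize_isCoatom (R : Type*) [CommRing R] (M : Ideal R) (hM : M.IsMaximal) :
    IsCoatom (idealize R M) := by
  constructor
  · intro h
    have h1 : (inr 1 : TrivSqZeroExt R R) ∈ idealize R M := h ▸ Subring.mem_top _
    have h1' : (1 : R) ∈ M := h1
    exact hM.ne_top ((Ideal.eq_top_iff_one M).2 h1')
  · intro S hS
    have hinl : ∀ r : R, (inl r : TrivSqZeroExt R R) ∈ S := fun r =>
      hS.le (show ((inl r : TrivSqZeroExt R R)).snd ∈ M by simp)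
    set J : Ideal R :=
      { carrier := {x | (inr x : TrivSqZeroExt R R) ∈ S}
        zero_mem' := by
          show (inr (0:R) : TrivSqZeroExt R R) ∈ S
          rw [inr_zero]; exact S.zero_mem
        add_mem' := fun {a b} ha hb => by
          show (inr (a + b) : TrivSqZeroExt R R) ∈ S
          rw [inr_add]; exact S.add_mem ha hb
        smul_mem' := fun r x hx => by
          show (inr (r • x) : TrivSqZeroExt R R) ∈ S
          have := S.mul_mem (hinl r) hx
          rwa [inl_mul_inr] at this } with hJ
    have hMJ : M ≤ J := fun m hm =>
      hS.le (show ((inr m : TrivSqZeroExt R R)).snd ∈ M by simpa)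
    obtain ⟨b, hbS, hbM⟩ := SetLike.exists_of_lt hS
    have hbsnd : b.snd ∈ J := by
      show (inr b.snd : TrivSqZeroExt R R) ∈ S
      have h2 : b - inl b.fst ∈ S := S.sub_mem hbS (hinl b.fst)
      have h3 : b - inl b.fst = inr b.snd := by ext <;> simp
      rwa [h3] at h2
    have hbM' : b.snd ∉ M := hbM
    have hJtop : J = ⊤ := hM.out.2 J (lt_of_le_of_ne hMJ (fun h => hbM' (h ▸ hbsnd)))
    have h1 : (inr 1 : TrivSqZeroExt R R) ∈ S := by
      have : (1 : R) ∈ J := hJtop ▸ Submodule.mem_top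
      exact this
    rw [eq_top_iff]
    intro x _
    have hx2 : (inr x.snd : TrivSqZeroExt R R) = inl x.snd * inr 1 := by
      rw [inl_mul_inr, smul_eq_mul, mul_one]
    have hx : x = inl x.fst + inl x.snd * inr 1 := by
      rw [← hx2, inl_fst_add_inr_snd_eq]
    rw [hx]
    exact S.add_mem (hinl _) (S.mul_mem (hinl _) h1)

/-- If `M` is a maximal ideal of `R`, then `R(+)M` is a maximal subring of `R(+)R`.
In particular `R(+)R` always has a maximal subring. -/
theorem stmt_4 (R : Type*) [CommRing R] (M : Ideal R) (hM : M.IsMaximal) :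
    IsCoatom (idealize R M) ∧ ∃ S : Subring (TrivSqZeroExt R R), IsCoatom S := by
  exact ⟨idealize_isCoatom R M hM, ⟨_, idealize_isCoatom R M hM⟩⟩
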